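/- Let x : [0,∞) → ℝ² be differentiable with ẋ(t) = u(t), and let h(x) = 1 - (x - C)ᵀP(x - C) with P positive definite and C ∈ ℝ². Suppose γ > 0, ρ ∈ [0,1), h(x(0)) < 0, and the control satisfies -2(x(t)-C)ᵀP·u(t) ≥ -γ·sign(h(x(t)))·|h(x(t))|^ρ... i.e. ∇h(x(t))·u(t) + γ·sign(h(x(t)))·|h(x(t))|^ρ ≥ 0 for all t. Then there exists T ≤ |h(x(0))|^(1-ρ)/(γ(1-ρ)) with h(x(T)) ≥ 0, i.e., x(T) lies in the ellipsoidal region {x : (x-C)ᵀP(x-C) ≤ 1}. -/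

import Mathlib

open Matrix

theorem stmt_16 (x u : ℝ → (Fin 2 → ℝ)) (hdyn : ∀ t : ℝ, HasDerivAt x (u t) t)
    (P : Matrix (Fin 2) (Fin 2) ℝ) (hP : P.PosDef) (C : Fin 2 → ℝ)
    (h : (Fin 2 → ℝ) → ℝ) (hdef : ∀ v, h v = 1 - (v - C) ⬝ᵥ (P *ᵥ (v - C)))
    (γ ρ : ℝ) (hγ : 0 < γ) (hρ0 : 0 ≤ ρ) (hρ1 : ρ < 1)
    (h0 : h (x 0) < 0)
    (hctrl : ∀ t : ℝ, 0 ≤ t →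
      -2 * ((x t - C) ⬝ᵥ (P *ᵥ u t)) + γ * Real.sign (h (x t)) * |h (x t)| ^ ρ ≥ 0) :
    ∃ T : ℝ, 0 ≤ T ∧ T ≤ |h (x 0)| ^ (1 - ρ) / (γ * (1 - ρ)) ∧ h (x T) ≥ 0 ∧
      (x T - C) ⬝ᵥ (P *ᵥ (x T - C)) ≤ 1 := by
  have hρ' : 0 < 1 - ρ := by linarith
  set T₀ : ℝ := |h (x 0)| ^ (1 - ρ) / (γ * (1 - ρ)) with hT₀
  have hsymm : ∀ i j, P i j = P j i := by
    intro i j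
    have := hP.isHermitian
    have h2 := congrFun (congrFun this j) i
    simpa [Matrix.conjTranspose_apply] using h2
  have hxi : ∀ (t : ℝ) (i : Fin 2), HasDerivAt (fun s => x s i) (u t i) t := by
    intro t i
    exact (hasDerivAt_pi.mp (hdyn t)) i
  -- derivative of h ∘ x
  have hφ : ∀ t : ℝ, HasDerivAt (fun s => h (x s))
      (-2 * ((x t - C) ⬝ᵥ (P *ᵥ u t))) t := by
    intro t
    have key : HasDerivAt
        (fun s => (1 : ℝ) - ∑ i, (x s i - C i) * ∑ j, P i j * (x s j - C j))
        (-(∑ i, (u t i * ∑ j, P i j * (x t j - C j)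
            + (x t i - C i) * ∑ j, P i j * u t j))) t := by
      apply HasDerivAt.const_sub
      apply HasDerivAt.fun_sum
      intro i _
      exact ((hxi t i).sub_const _).mul
        (HasDerivAt.fun_sum fun j _ => ((hxi t j).sub_const _).const_mul _)
    have heq : (fun s => h (x s))
        = fun s => (1 : ℝ) - ∑ i, (x s i - C i) * ∑ j, P i j * (x s j - C j) := by
      funext s
      simp [hdef, dotProduct, Matrix.mulVec, Pi.sub_apply, Matrix.vecHead, Matrix.vecTail]
    rw [heq]
    convert key using 1
    have hswap : ∑ i, u t i * ∑ j, P i j * (x t j - C j)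
        = ∑ i, (x t i - C i) * ∑ j, P i j * u t j := by
      simp_rw [Finset.mul_sum]
      rw [Finset.sum_comm]
      refine Finset.sum_congr rfl fun j _ => Finset.sum_congr rfl fun i _ => ?_
      rw [hsymm i j]; ring
    rw [Finset.sum_add_distrib, hswap]
    simp [dotProduct, Matrix.mulVec, Pi.sub_apply, Matrix.vecHead, Matrix.vecTail]
    ring
  by_contra hcon
  push_neg at hcon
  -- everything on [0, T₀] stays negative
  have hneg : ∀ t : ℝ, 0 ≤ t → t ≤ T₀ → h (x t) < 0 := by
    intro t h1 h2
    by_contra hge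
    push_neg at hge
    have hq := hcon t h1 h2 hge
    have hd := hdef (x t)
    linarith
  have habs0 : |h (x 0)| = -h (x 0) := abs_of_neg h0
  have ha0 : 0 < -h (x 0) := by linarith
  have hT₀pos : 0 < T₀ := by
    rw [hT₀, habs0]
    exact div_pos (Real.rpow_pos_of_pos ha0 _) (by positivity)
  -- the Lyapunov-like function
  set g : ℝ → ℝ := fun t => (-h (x t)) ^ (1 - ρ) + γ * (1 - ρ) * t with hg
  have hgderiv : ∀ t ∈ Set.Icc (0 : ℝ) T₀, HasDerivAt g
      ((1 - ρ) * (-h (x t)) ^ (1 - ρ - 1) * (-(-2 * ((x t - C) ⬝ᵥ (P *ᵥ u t))))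
        + γ * (1 - ρ)) t := by
    intro t ht
    have hlt := hneg t ht.1 ht.2
    have h1 : HasDerivAt (fun s => (-h (x s)) ^ (1 - ρ))
        ((1 - ρ) * (-h (x t)) ^ (1 - ρ - 1) * (-(-2 * ((x t - C) ⬝ᵥ (P *ᵥ u t))))) t := by
      have := (Real.hasDerivAt_rpow_const (x := -h (x t)) (p := 1 - ρ)
        (Or.inl (by linarith))).comp t ((hφ t).neg)
      simpa [mul_comm, mul_assoc, Function.comp_def, Pi.neg_apply] using this
    have h2 : HasDerivAt (fun s : ℝ => γ * (1 - ρ) * s) (γ * (1 - ρ)) t := by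
      simpa using (hasDerivAt_id t).const_mul (γ * (1 - ρ))
    exact h1.add h2
  have hderiv_le : ∀ t ∈ interior (Set.Icc (0 : ℝ) T₀), deriv g t ≤ 0 := by
    intro t ht
    rw [interior_Icc] at ht
    have htIcc : t ∈ Set.Icc (0 : ℝ) T₀ := ⟨ht.1.le, ht.2.le⟩
    rw [(hgderiv t htIcc).deriv]
    have hlt := hneg t ht.1.le ht.2.le
    have hpos : 0 < -h (x t) := by linarith
    have hctrl' := hctrl t ht.1.le
    have hsign : Real.sign (h (x t)) = -1 := Real.sign_of_neg hlt
    have habs : |h (x t)| = -h (x t) := abs_of_neg hlt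
    rw [hsign, habs] at hctrl'
    -- hctrl' : -2 * (...) + γ * (-1) * (-h (x t)) ^ ρ ≥ 0
    have hD : γ * (-h (x t)) ^ ρ ≤ -2 * ((x t - C) ⬝ᵥ (P *ᵥ u t)) := by linarith
    have hbase : (-h (x t)) ^ (1 - ρ - 1) * (-h (x t)) ^ ρ = 1 := by
      rw [← Real.rpow_add hpos]
      norm_num
    have hpow_pos : 0 < (-h (x t)) ^ (1 - ρ - 1) := Real.rpow_pos_of_pos hpos _
    have hkey : (1 - ρ) * (-h (x t)) ^ (1 - ρ - 1)
        * (-(-2 * ((x t - C) ⬝ᵥ (P *ᵥ u t))))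
        ≤ (1 - ρ) * (-h (x t)) ^ (1 - ρ - 1) * (-(γ * (-h (x t)) ^ ρ)) := by
      apply mul_le_mul_of_nonneg_left (by linarith)
      positivity
    have heq : (1 - ρ) * (-h (x t)) ^ (1 - ρ - 1) * (-(γ * (-h (x t)) ^ ρ))
        = -(γ * (1 - ρ)) := by
      have : (1 - ρ) * (-h (x t)) ^ (1 - ρ - 1) * (-(γ * (-h (x t)) ^ ρ))
          = -(γ * (1 - ρ)) * ((-h (x t)) ^ (1 - ρ - 1) * (-h (x t)) ^ ρ) := by ring
      rw [this, hbase]; ring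
    linarith [hkey.trans_eq heq]
  have hcont : ContinuousOn g (Set.Icc 0 T₀) := fun t ht =>
    (hgderiv t ht).continuousAt.continuousWithinAt
  have hdiff : DifferentiableOn ℝ g (interior (Set.Icc (0 : ℝ) T₀)) := by
    intro t ht
    rw [interior_Icc] at ht
    exact ((hgderiv t ⟨ht.1.le, ht.2.le⟩).differentiableAt).differentiableWithinAt
  have hanti : AntitoneOn g (Set.Icc 0 T₀) :=
    antitoneOn_of_deriv_nonpos (convex_Icc _ _) hcont hdiff hderiv_le
  have hle : g T₀ ≤ g 0 :=
    hanti ⟨le_refl 0, hT₀pos.le⟩ ⟨hT₀pos.le, le_refl T₀⟩ hT₀pos.le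
  have hg0 : g 0 = (-h (x 0)) ^ (1 - ρ) := by simp [hg]
  have hgT : g T₀ = (-h (x T₀)) ^ (1 - ρ) + γ * (1 - ρ) * T₀ := rfl
  have hTval : γ * (1 - ρ) * T₀ = (-h (x 0)) ^ (1 - ρ) := by
    rw [hT₀, habs0]
    field_simp
  have hfinal : (-h (x T₀)) ^ (1 - ρ) ≤ 0 := by
    rw [hgT, hg0, hTval] at hle
    linarith
  have : 0 < (-h (x T₀)) ^ (1 - ρ) :=
    Real.rpow_pos_of_pos (by linarith [hneg T₀ hT₀pos.le (le_refl T₀)]) _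
  linarith
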